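/- Let c ≠ 0 be a real number and let x : ℝ → ℝ be twice differentiable with x''(t) + c·x'(t) = 0 for all t, x(0) = x₀, x'(0) = v₀, and set A₁ = x₀ + v₀/c. Then x also solves the conservative equation: x''(t) − c²·(x(t) − A₁) = 0 for all t ∈ ℝ. -/

import Mathlib

theorem stmt_3 (c : ℝ) (hc : c ≠ 0) (x : ℝ → ℝ) (x₀ v₀ A₁ : ℝ)
    (hx : Differentiable ℝ x) (hx' : Differentiable ℝ (deriv x))
    (hode : ∀ t : ℝ, deriv (deriv x) t + c * deriv x t = 0)
    (h0 : x 0 = x₀) (h0' : deriv x 0 = v₀)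
    (hA₁ : A₁ = x₀ + v₀ / c) :
    ∀ t : ℝ, deriv (deriv x) t - c ^ 2 * (x t - A₁) = 0 := by
  intro t
  set f : ℝ → ℝ := fun s => c * x s + deriv x s with hf
  have hfd : Differentiable ℝ f := (hx.const_mul c).add hx'
  have hderiv : ∀ s, deriv f s = 0 := by
    intro s
    have : deriv f s = c * deriv x s + deriv (deriv x) s := by
      rw [hf]
      rw [deriv_fun_add ((hx.const_mul c).differentiableAt) (hx'.differentiableAt),
        deriv_const_mul c hx.differentiableAt]
    rw [this]
    linarith [hode s]
  have hconst : f t = f 0 := is_const_of_deriv_eq_zero hfd hderiv t 0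
  have hf0 : f 0 = c * x₀ + v₀ := by simp [hf, h0, h0']
  have hft : c * x t + deriv x t = c * x₀ + v₀ := by rw [← hf0]; exact hconst
  have hcA : c * A₁ = c * x₀ + v₀ := by
    rw [hA₁]; field_simp
  have := hode t
  linear_combination this - c * hft + c * hcA
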